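/- If nonzero vectors u, v ∈ F[x]^{ℓ+1} have distinct leading positions and p, q ∈ F[x] are nonzero, then p·u + q·v ≠ 0, and if moreover LP(p·u) ≠ LP(q·v) then LP(p·u + q·v) equals the leading position of whichever of p·u, q·v has the larger value val, where val(w) = (ℓ+1)·deg w + LP(w). -/

import Mathlib

open Polynomial

noncomputable section

variable {F : Type*} [Field F]

/-- The degree of a vector of polynomials: maximum of the coordinate degrees. -/
def vecDeg {n : ℕ} (v : Fin n → Polynomial F) : WithBot ℕ :=
  Finset.univ.sup fun j => (v j).degree

/-- The degree of a vector, as a natural number. -/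
def vecDegNat {n : ℕ} (v : Fin n → Polynomial F) : ℕ :=
  Finset.univ.sup fun j => (v j).natDegree

/-- The leading position of a vector: the largest index attaining the degree. -/
def leadPos {n : ℕ} (v : Fin n → Polynomial F) : ℕ :=
  (Finset.univ.filter fun j => (v j).degree = vecDeg v).sup fun j => (j : ℕ)

/-- The value function val(v) = n * deg v + LP(v). -/
def vecVal {n : ℕ} (v : Fin n → Polynomial F) : ℕ :=
  n * vecDegNat v + leadPos v

/-- The weight-embedding map Φ. -/
def PhiW (ν : ℕ) {n : ℕ} (w : Fin n → ℕ) (v : Fin n → Polynomial F) :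
    Fin n → Polynomial F :=
  fun j => X ^ (w j) * (Polynomial.expand F ν (v j))

/-- The rows of the canonical basis matrix M. -/
def rowBasisM (ℓ : ℕ) (S G : Fin ℓ → Polynomial F) :
    Fin (ℓ+1) → Fin (ℓ+1) → Polynomial F :=
  fun i => Fin.cases (Fin.cons 1 S) (fun i' => fun j => if j = i'.succ then G i' else 0) i

variable {n : ℕ}

lemma degree_le_vecDeg (v : Fin n → Polynomial F) (j : Fin n) : (v j).degree ≤ vecDeg v :=
  Finset.le_sup (f := fun j => (v j).degree) (Finset.mem_univ j)

lemma vecDeg_ne_bot {v : Fin n → Polynomial F} (hv : v ≠ 0) : vecDeg v ≠ ⊥ := by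
  obtain ⟨k, hk⟩ := Function.ne_iff.mp hv
  have h := degree_le_vecDeg v k
  intro hb
  rw [hb, le_bot_iff, degree_eq_bot] at h
  exact hk h

lemma exists_lp {v : Fin n → Polynomial F} (hv : v ≠ 0) :
    ∃ i : Fin n, (i : ℕ) = leadPos v ∧ (v i).degree = vecDeg v ∧
      ∀ k : Fin n, (v k).degree = vecDeg v → (k : ℕ) ≤ leadPos v := by
  obtain ⟨k, hk⟩ := Function.ne_iff.mp hv
  obtain ⟨j, -, hj⟩ := Finset.exists_mem_eq_sup Finset.univ ⟨k, Finset.mem_univ k⟩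
    (fun j => (v j).degree)
  have hS : (Finset.univ.filter fun j => (v j).degree = vecDeg v).Nonempty :=
    ⟨j, Finset.mem_filter.mpr ⟨Finset.mem_univ j, hj.symm⟩⟩
  obtain ⟨i, hiS, hi⟩ := Finset.exists_mem_eq_sup _ hS (fun j : Fin n => (j : ℕ))
  refine ⟨i, hi.symm, (Finset.mem_filter.mp hiS).2, fun k hkd => ?_⟩
  exact Finset.le_sup (Finset.mem_filter.mpr ⟨Finset.mem_univ k, hkd⟩)

lemma degree_lt_of_lp_lt {v : Fin n → Polynomial F} (hv : v ≠ 0) (k : Fin n)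
    (hk : leadPos v < (k : ℕ)) : (v k).degree < vecDeg v := by
  obtain ⟨i, -, -, hmax⟩ := exists_lp hv
  refine lt_of_le_of_ne (degree_le_vecDeg v k) fun h => ?_
  exact absurd (hmax k h) (not_le.mpr hk)

lemma leadPos_lt {v : Fin n → Polynomial F} (hv : v ≠ 0) : leadPos v < n := by
  obtain ⟨i, hi, -, -⟩ := exists_lp hv
  exact hi ▸ i.isLt

lemma vecDeg_smul {p : Polynomial F} (v : Fin n → Polynomial F) (hv : v ≠ 0) :
    vecDeg (p • v) = p.degree + vecDeg v := by
  obtain ⟨i, -, hi, -⟩ := exists_lp hv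
  apply le_antisymm
  · apply Finset.sup_le
    intro j _
    simp only [Pi.smul_apply, smul_eq_mul, degree_mul]
    exact add_le_add le_rfl (degree_le_vecDeg v j)
  · calc p.degree + vecDeg v = ((p • v) i).degree := by
          simp [degree_mul, hi]
      _ ≤ _ := degree_le_vecDeg _ i

lemma leadPos_smul {p : Polynomial F} (hp : p ≠ 0) (v : Fin n → Polynomial F) (hv : v ≠ 0) :
    leadPos (p • v) = leadPos v := by
  unfold leadPos
  congr 1
  apply Finset.filter_congr
  intro j _
  simp only [Pi.smul_apply, smul_eq_mul, degree_mul, vecDeg_smul v hv, eq_iff_iff]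
  exact WithBot.add_left_inj (degree_ne_bot.mpr hp)

lemma smul_ne_zero' {p : Polynomial F} (hp : p ≠ 0) {v : Fin n → Polynomial F} (hv : v ≠ 0) :
    p • v ≠ 0 := smul_ne_zero hp hv

/-- Dominance hypothesis: a strictly dominates b in the (deg, LP) lex order. -/
abbrev Dominates (a b : Fin n → Polynomial F) : Prop :=
  vecDeg b < vecDeg a ∨ (vecDeg a = vecDeg b ∧ leadPos b < leadPos a)

lemma add_dominant {a b : Fin n → Polynomial F} (ha : a ≠ 0) (hb : b ≠ 0)
    (hd : Dominates a b) :
    a + b ≠ 0 ∧ vecDeg (a + b) = vecDeg a ∧ leadPos (a + b) = leadPos a := by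
  obtain ⟨i, hilp, hideg, himax⟩ := exists_lp ha
  -- key pointwise facts
  have hbi : (b i).degree < (a i).degree := by
    rcases hd with h | ⟨hdeq, hlp⟩
    · exact lt_of_le_of_lt (degree_le_vecDeg b i) (hideg ▸ h)
    · rw [hideg, hdeq]
      exact degree_lt_of_lp_lt hb i (hilp ▸ hlp)
  have hsumi : ((a + b) i).degree = vecDeg a := by
    rw [Pi.add_apply, degree_add_eq_left_of_degree_lt hbi, hideg]
  have hle : ∀ j : Fin n, ((a + b) j).degree ≤ vecDeg a := by
    intro j
    refine le_trans (degree_add_le _ _) (max_le (degree_le_vecDeg a j) ?_)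
    rcases hd with h | ⟨hdeq, -⟩
    · exact le_of_lt (lt_of_le_of_lt (degree_le_vecDeg b j) h)
    · exact hdeq ▸ degree_le_vecDeg b j
  have hlt : ∀ j : Fin n, leadPos a < (j : ℕ) → ((a + b) j).degree < vecDeg a := by
    intro j hj
    refine lt_of_le_of_lt (degree_add_le _ _) (max_lt (degree_lt_of_lp_lt ha j hj) ?_)
    rcases hd with h | ⟨hdeq, hlp⟩
    · exact lt_of_le_of_lt (degree_le_vecDeg b j) h
    · exact hdeq ▸ degree_lt_of_lp_lt hb j (lt_trans hlp hj)
  have hdeg : vecDeg (a + b) = vecDeg a := by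
    apply le_antisymm (Finset.sup_le fun j _ => hle j)
    exact hsumi ▸ degree_le_vecDeg (a + b) i
  have hne : a + b ≠ 0 := by
    intro h0
    have : ((a + b) i).degree = ⊥ := by rw [h0]; simp
    rw [hsumi] at this
    exact vecDeg_ne_bot ha this
  refine ⟨hne, hdeg, ?_⟩
  apply le_antisymm
  · apply Finset.sup_le
    intro k hk
    have hkd := (Finset.mem_filter.mp hk).2
    by_contra hgt
    push_neg at hgt
    rw [hdeg] at hkd
    exact absurd hkd (ne_of_lt (hlt k hgt))
  · rw [← hilp]
    exact Finset.le_sup (Finset.mem_filter.mpr ⟨Finset.mem_univ i, hsumi.trans hdeg.symm⟩)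

lemma vecDeg_eq_natCast {v : Fin n → Polynomial F} (hv : v ≠ 0) :
    vecDeg v = (vecDegNat v : WithBot ℕ) := by
  obtain ⟨k, hk⟩ := Function.ne_iff.mp hv
  obtain ⟨j, -, hj⟩ := Finset.exists_mem_eq_sup Finset.univ ⟨k, Finset.mem_univ k⟩
    (fun j => (v j).degree)
  have hjne : v j ≠ 0 := by
    intro h0
    apply vecDeg_ne_bot hv
    rw [show vecDeg v = (v j).degree from hj, h0, degree_zero]
  have h1 : vecDegNat v = (v j).natDegree := by
    apply le_antisymm
    · apply Finset.sup_le
      intro m _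
      by_cases hm : v m = 0
      · simp [hm]
      · exact natDegree_le_natDegree (hj ▸ degree_le_vecDeg v m)
    · exact Finset.le_sup (f := fun m => (v m).natDegree) (Finset.mem_univ j)
  rw [h1, show vecDeg v = (v j).degree from hj, degree_eq_natDegree hjne]

lemma vecVal_lt_of_dominates {a b : Fin n → Polynomial F} (ha : a ≠ 0) (hb : b ≠ 0)
    (hd : Dominates a b) : vecVal b < vecVal a := by
  have hla := leadPos_lt ha
  have hlb := leadPos_lt hb
  unfold vecVal
  rcases hd with h | ⟨hdeq, hlp⟩
  · rw [vecDeg_eq_natCast ha, vecDeg_eq_natCast hb, Nat.cast_lt] at h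
    calc n * vecDegNat b + leadPos b < n * vecDegNat b + n := by omega
      _ = n * (vecDegNat b + 1) := by ring
      _ ≤ n * vecDegNat a := Nat.mul_le_mul_left n h
      _ ≤ n * vecDegNat a + leadPos a := Nat.le_add_right _ _
  · rw [vecDeg_eq_natCast ha, vecDeg_eq_natCast hb, Nat.cast_inj] at hdeq
    rw [hdeq]
    omega

theorem stmt6 (ℓ : ℕ) (u v : Fin (ℓ+1) → Polynomial F) (hu : u ≠ 0) (hv : v ≠ 0)
    (hLP : leadPos u ≠ leadPos v) (p q : Polynomial F) (hp : p ≠ 0) (hq : q ≠ 0) :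
    p • u + q • v ≠ 0 ∧
      (leadPos (p • u) ≠ leadPos (q • v) →
        leadPos (p • u + q • v) =
          if vecVal (q • v) < vecVal (p • u) then leadPos (p • u)
          else leadPos (q • v)) := by
  set a := p • u with ha_def
  set b := q • v with hb_def
  have ha : a ≠ 0 := smul_ne_zero hp hu
  have hb : b ≠ 0 := smul_ne_zero hq hv
  have hlpab : leadPos a ≠ leadPos b := by
    rw [ha_def, hb_def, leadPos_smul hp u hu, leadPos_smul hq v hv]
    exact hLP
  have hdom : Dominates a b ∨ Dominates b a := by
    rcases lt_trichotomy (vecDeg a) (vecDeg b) with h | h | h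
    · exact Or.inr (Or.inl h)
    · rcases lt_trichotomy (leadPos a) (leadPos b) with h2 | h2 | h2
      · exact Or.inr (Or.inr ⟨h.symm, h2⟩)
      · exact absurd h2 hlpab
      · exact Or.inl (Or.inr ⟨h, h2⟩)
    · exact Or.inl (Or.inl h)
  rcases hdom with hd | hd
  · obtain ⟨hne, -, hlp⟩ := add_dominant ha hb hd
    refine ⟨hne, fun _ => ?_⟩
    rw [if_pos (vecVal_lt_of_dominates ha hb hd), hlp]
  · obtain ⟨hne, -, hlp⟩ := add_dominant hb ha hd
    rw [add_comm b a] at hne hlp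
    refine ⟨hne, fun _ => ?_⟩
    rw [if_neg (not_lt.mpr (le_of_lt (vecVal_lt_of_dominates hb ha hd))), hlp]
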